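/- (One-jump lower bound on off-diagonal transition probabilities, used in the proof of Lemma 2.3.) Let Q be an h×h generator matrix and M ≥ 0 a real number with −q_{cc} ≤ M for every c ∈ {1,…,h}. Then for all states a ≠ b and every t ≥ 0, (exp(tQ))_{ab} ≥ q_{ab} · t · exp(−M·t). -/

import Mathlib

set_option autoImplicit false

open Matrix

/-- The matrix exponential of a real square matrix. -/
noncomputable def mexp {n : Type*} [Fintype n] [DecidableEq n] (A : Matrix n n ℝ) :
    Matrix n n ℝ :=
  NormedSpace.exp A

open NormedSpace in
lemma entry_le_exp_entry {h : ℕ} (A : Matrix (Fin h) (Fin h) ℝ)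
    (hA : ∀ i j, 0 ≤ A i j) (a b : Fin h) (hab : a ≠ b) :
    A a b ≤ NormedSpace.exp A a b := by
  letI : SeminormedRing (Matrix (Fin h) (Fin h) ℝ) := Matrix.linftyOpSemiNormedRing
  letI : NormedRing (Matrix (Fin h) (Fin h) ℝ) := Matrix.linftyOpNormedRing
  letI : NormedAlgebra ℝ (Matrix (Fin h) (Fin h) ℝ) := Matrix.linftyOpNormedAlgebra
  have hpow : ∀ n i j, 0 ≤ (A ^ n) i j := by
    intro n
    induction n with
    | zero =>
      intro i j
      by_cases hij : i = j <;> simp [pow_zero, Matrix.one_apply, hij]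
    | succ n ih =>
      intro i j
      rw [pow_succ, Matrix.mul_apply]
      exact Finset.sum_nonneg fun k _ => mul_nonneg (ih i k) (hA k j)
  set f : ℕ → Matrix (Fin h) (Fin h) ℝ := fun n => (n.factorial : ℝ)⁻¹ • A ^ n with hf
  have hsum : Summable f := expSeries_summable' (𝕂 := ℝ) A
  have hhs : HasSum f (NormedSpace.exp A) := by
    rw [exp_eq_tsum ℝ]
    exact hsum.hasSum
  have hentry : HasSum (fun n => f n a b) (NormedSpace.exp A a b) := by
    have h1 := Pi.hasSum.mp hhs a
    exact Pi.hasSum.mp h1 b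
  have hnn : ∀ n, 0 ≤ f n a b := fun n =>
    mul_nonneg (by positivity) (hpow n a b)
  have h1 : f 1 a b = A a b := by simp [hf]
  calc A a b = f 1 a b := h1.symm
    _ ≤ ∑' n, f n a b := Summable.le_tsum ⟨_, hentry⟩ 1 fun j _ => hnn j
    _ = NormedSpace.exp A a b := hentry.tsum_eq

/-- One-jump lower bound on off-diagonal transition probabilities: for a generator matrix
`Q` with all exit intensities bounded by `M`, `(exp (t • Q))_{ab} ≥ q_{ab} · t · exp(−M·t)`
for all `a ≠ b` and `t ≥ 0`. -/
theorem exp_offdiag_entry_lower_bound {h : ℕ} (Q : Matrix (Fin h) (Fin h) ℝ)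
    (hoff : ∀ i j, i ≠ j → 0 ≤ Q i j) (hdiag : ∀ i, Q i i ≤ 0)
    (hrow : ∀ i, ∑ j, Q i j = 0) (M : ℝ) (hM0 : 0 ≤ M) (hM : ∀ c, -Q c c ≤ M)
    (a b : Fin h) (hab : a ≠ b) (t : ℝ) (ht : 0 ≤ t) :
    Q a b * t * Real.exp (-M * t) ≤ mexp (t • Q) a b := by
  classical
  set P : Matrix (Fin h) (Fin h) ℝ := Q + M • 1 with hP
  have hPnn : ∀ i j, 0 ≤ P i j := by
    intro i j
    by_cases hij : i = j
    · subst hij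
      have := hM i
      simp only [hP, Matrix.add_apply, Matrix.smul_apply, Matrix.one_apply_eq, smul_eq_mul,
        mul_one]
      linarith
    · have := hoff i j hij
      simp only [hP, Matrix.add_apply, Matrix.smul_apply, Matrix.one_apply_ne hij, smul_eq_mul,
        mul_zero, add_zero]
      exact this
  have htPnn : ∀ i j, 0 ≤ (t • P) i j := fun i j =>
    mul_nonneg ht (hPnn i j)
  have hsplit : t • Q = (-(M * t)) • (1 : Matrix (Fin h) (Fin h) ℝ) + t • P := by
    ext i j
    simp only [hP, Matrix.add_apply, Matrix.smul_apply, smul_add, smul_smul, smul_eq_mul]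
    ring
  have hcomm : Commute ((-(M * t)) • (1 : Matrix (Fin h) (Fin h) ℝ)) (t • P) :=
    (Commute.one_left (t • P)).smul_left _
  have hmul : mexp (t • Q) =
      NormedSpace.exp ((-(M * t)) • (1 : Matrix (Fin h) (Fin h) ℝ)) *
        NormedSpace.exp (t • P) := by
    rw [mexp, hsplit]
    exact Matrix.exp_add_of_commute _ _ hcomm
  have hscal : NormedSpace.exp ((-(M * t)) • (1 : Matrix (Fin h) (Fin h) ℝ)) =
      Real.exp (-(M * t)) • (1 : Matrix (Fin h) (Fin h) ℝ) := by
    letI : SeminormedRing (Matrix (Fin h) (Fin h) ℝ) := Matrix.linftyOpSemiNormedRing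
    letI : NormedRing (Matrix (Fin h) (Fin h) ℝ) := Matrix.linftyOpNormedRing
    letI : NormedAlgebra ℝ (Matrix (Fin h) (Fin h) ℝ) := Matrix.linftyOpNormedAlgebra
    rw [← Algebra.algebraMap_eq_smul_one]
    erw [← NormedSpace.algebraMap_exp_comm]
    rw [Real.exp_eq_exp_ℝ, Algebra.algebraMap_eq_smul_one]
  have hentry : (t • P) a b ≤ NormedSpace.exp (t • P) a b :=
    entry_le_exp_entry (t • P) htPnn a b hab
  have htP : (t • P) a b = t * Q a b := by
    simp [hP, Matrix.add_apply, Matrix.one_apply_ne hab]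
  have hpos : 0 < Real.exp (-(M * t)) := Real.exp_pos _
  have : mexp (t • Q) a b = Real.exp (-(M * t)) * NormedSpace.exp (t • P) a b := by
    rw [hmul, hscal, Matrix.smul_mul, Matrix.one_mul, Matrix.smul_apply, smul_eq_mul]
  rw [this]
  have : Q a b * t * Real.exp (-M * t) = Real.exp (-(M * t)) * (t * Q a b) := by
    rw [neg_mul]; ring
  rw [this]
  exact mul_le_mul_of_nonneg_left (htP ▸ hentry) hpos.le
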